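/- For every ordinal ξ with 1 ≤ ξ < ω₁: (S_ξ[A_2])[A_3] ⊆ (S_ξ)³. -/

import Mathlib

noncomputable section

open scoped Classical

/-- The first uncountable ordinal. -/
def omegaOne : Ordinal := (Cardinal.aleph 1).ord

/-- `A < B` for finite sets of naturals: every element of `A` is smaller than every
element of `B` (i.e. `max A < min B`, with the conventions `∅ < B` and `A < ∅`). -/
def finLT (A B : Finset ℕ) : Prop := ∀ a ∈ A, ∀ b ∈ B, a < b

/-- `n ≤ A`, i.e. `n ≤ min A` (with `min ∅ = ∞`). -/
def finLE (n : ℕ) (A : Finset ℕ) : Prop := ∀ a ∈ A, n ≤ a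

/-- The successor step in the definition of the Schreier families:
unions `E_1 ∪ ⋯ ∪ E_n` with `n ≤ E_1 < E_2 < ⋯ < E_n` and each `E_i` a nonempty member
of `F` (the empty set arises from `n = 0`). -/
def succStep (F : Set (Finset ℕ)) : Set (Finset ℕ) :=
  {A | ∃ (n : ℕ) (E : Fin n → Finset ℕ),
        (∀ i, E i ∈ F) ∧ (∀ i, (E i).Nonempty) ∧
        (∀ i j : Fin n, i < j → finLT (E i) (E j)) ∧
        (∀ i, finLE n (E i)) ∧ A = Finset.univ.biUnion E}

/-- A system of Schreier families `S ξ` for `ξ < ω₁`, together with the chosen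
`ξ`-approximating sequences `α ξ ·` (indexed by `n ≥ 1`) for limit ordinals `ξ < ω₁`,
satisfying the standing assumptions:  each `α ξ n` is a successor ordinal in `[1, ξ)`,
the sequence strictly increases to `ξ`, `α ξ 1 = 1`, and whenever
`A, B ∈ S (α ξ n)` with `1 < A < B` then `A ∪ B ∈ S (α ξ (n+1))`. -/
structure SchreierSystem where
  α : Ordinal → ℕ → Ordinal
  S : Ordinal → Set (Finset ℕ)
  S_zero : S 0 = {A : Finset ℕ | A = ∅ ∨ ∃ n : ℕ, A = {n}}
  S_succ : ∀ γ : Ordinal, S (γ + 1) = succStep (S γ)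
  S_limit : ∀ ξ : Ordinal, Order.IsSuccLimit ξ → ξ < omegaOne →
    S ξ = {E : Finset ℕ | ∃ n : ℕ, 1 ≤ n ∧ finLE n E ∧ E ∈ S (α ξ n)}
  α_pos : ∀ ξ : Ordinal, Order.IsSuccLimit ξ → ξ < omegaOne → ∀ n : ℕ, 1 ≤ n → 1 ≤ α ξ n
  α_lt : ∀ ξ : Ordinal, Order.IsSuccLimit ξ → ξ < omegaOne → ∀ n : ℕ, 1 ≤ n → α ξ n < ξ
  α_succOrd : ∀ ξ : Ordinal, Order.IsSuccLimit ξ → ξ < omegaOne → ∀ n : ℕ, 1 ≤ n →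
    ∃ β : Ordinal, α ξ n = β + 1
  α_mono : ∀ ξ : Ordinal, Order.IsSuccLimit ξ → ξ < omegaOne → ∀ n : ℕ, 1 ≤ n → α ξ n < α ξ (n + 1)
  α_tendsto : ∀ ξ : Ordinal, Order.IsSuccLimit ξ → ξ < omegaOne → ∀ β : Ordinal, β < ξ →
    ∃ n : ℕ, 1 ≤ n ∧ β < α ξ n
  α_one : ∀ ξ : Ordinal, Order.IsSuccLimit ξ → ξ < omegaOne → α ξ 1 = 1
  α_union : ∀ ξ : Ordinal, Order.IsSuccLimit ξ → ξ < omegaOne → ∀ n : ℕ, 1 ≤ n →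
    ∀ A B : Finset ℕ, A ∈ S (α ξ n) → B ∈ S (α ξ n) → finLE 2 A → finLT A B →
      A ∪ B ∈ S (α ξ (n + 1))

/-- `A` is a maximal element of the family `F` (with respect to inclusion). -/
def MaxIn (F : Set (Finset ℕ)) (A : Finset ℕ) : Prop :=
  A ∈ F ∧ ∀ B ∈ F, A ⊆ B → B = A

/-- The minimum of a finite set of naturals (`0` if the set is empty; it is only ever
used for nonempty sets). -/
def sMin (A : Finset ℕ) : ℕ := sInf (A : Set ℕ)

/-- The composition `M[N]` of two families of finite subsets of `ℕ`:
all unions `F_1 ∪ ⋯ ∪ F_k` with `F_i ∈ N` nonempty, `F_1 < F_2 < ⋯ < F_k` and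
`{min F_i : i = 1, …, k} ∈ M`. -/
def famComp (M N : Set (Finset ℕ)) : Set (Finset ℕ) :=
  {A | ∃ (k : ℕ) (F : Fin k → Finset ℕ),
        (∀ i, F i ∈ N) ∧ (∀ i, (F i).Nonempty) ∧
        (∀ i j : Fin k, i < j → finLT (F i) (F j)) ∧
        (Finset.univ.image fun i => sMin (F i)) ∈ M ∧
        A = Finset.univ.biUnion F}

/-- `(M)³ = {M₁ ∪ M₂ ∪ M₃ : M₁ < M₂ < M₃, each Mᵢ ∈ M}`. -/
def famThree (M : Set (Finset ℕ)) : Set (Finset ℕ) :=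
  {A | ∃ M1 M2 M3 : Finset ℕ, M1 ∈ M ∧ M2 ∈ M ∧ M3 ∈ M ∧
        finLT M1 M2 ∧ finLT M2 M3 ∧ A = M1 ∪ M2 ∪ M3}

/-- `A_n = {E ⊆ ℕ : |E| ≤ n}`. -/
def Acard (n : ℕ) : Set (Finset ℕ) := {E : Finset ℕ | E.card ≤ n}

namespace SchreierAux

/-- Union of a list of finsets. -/
def lUnion (l : List (Finset ℕ)) : Finset ℕ := l.foldr (· ∪ ·) ∅

@[simp] lemma lUnion_nil : lUnion [] = ∅ := rfl

@[simp] lemma lUnion_cons (p : Finset ℕ) (l : List (Finset ℕ)) :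
    lUnion (p :: l) = p ∪ lUnion l := rfl

lemma mem_lUnion {l : List (Finset ℕ)} {x : ℕ} : x ∈ lUnion l ↔ ∃ p ∈ l, x ∈ p := by
  induction l with
  | nil => simp
  | cons a l ih => simp [ih]

lemma lUnion_append (l1 l2 : List (Finset ℕ)) :
    lUnion (l1 ++ l2) = lUnion l1 ∪ lUnion l2 := by
  induction l1 with
  | nil => simp
  | cons a l ih => simp [ih, Finset.union_assoc]

lemma card_lUnion_le (l : List (Finset ℕ)) (m : ℕ) (h : ∀ p ∈ l, p.card ≤ m) :
    (lUnion l).card ≤ l.length * m := by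
  induction l with
  | nil => simp
  | cons a l ih =>
    have := Finset.card_union_le a (lUnion l)
    have h1 := h a (by simp)
    have h2 := ih (fun p hp => h p (by simp [hp]))
    simp only [lUnion_cons, List.length_cons]
    calc (a ∪ lUnion l).card ≤ a.card + (lUnion l).card := Finset.card_union_le _ _
      _ ≤ m + l.length * m := by omega
      _ = (l.length + 1) * m := by ring

lemma sMin_mem {A : Finset ℕ} (h : A.Nonempty) : sMin A ∈ A := by
  have : (A : Set ℕ).Nonempty := by exact_mod_cast h
  have := Nat.sInf_mem this
  exact_mod_cast this

lemma sMin_le {A : Finset ℕ} {a : ℕ} (h : a ∈ A) : sMin A ≤ a :=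
  Nat.sInf_le (by exact_mod_cast h)

lemma sMin_lt_sMin {A B : Finset ℕ} (hA : A.Nonempty) (hB : B.Nonempty)
    (h : finLT A B) : sMin A < sMin B :=
  h _ (sMin_mem hA) _ (sMin_mem hB)

lemma finLE_mono {m n : ℕ} {A : Finset ℕ} (h : m ≤ n) (hn : finLE n A) : finLE m A :=
  fun a ha => le_trans h (hn a ha)

lemma pairwise_cases {l : List (Finset ℕ)} (h : l.Pairwise finLT) {a b : Finset ℕ}
    (ha : a ∈ l) (hb : b ∈ l) : a = b ∨ finLT a b ∨ finLT b a := by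
  induction l with
  | nil => simp at ha
  | cons c l ih =>
    rcases List.pairwise_cons.1 h with ⟨hc, hl⟩
    rcases List.mem_cons.1 ha with rfl | ha' <;> rcases List.mem_cons.1 hb with rfl | hb'
    · exact Or.inl rfl
    · exact Or.inr (Or.inl (hc _ hb'))
    · exact Or.inr (Or.inr (hc _ ha'))
    · exact ih hl ha' hb'

/-- List-style characterization of `famComp`. -/
lemma famComp_iff {M N : Set (Finset ℕ)} {A : Finset ℕ} :
    A ∈ famComp M N ↔ ∃ l : List (Finset ℕ), l.Pairwise finLT ∧
      (∀ p ∈ l, p.Nonempty) ∧ (∀ p ∈ l, p ∈ N) ∧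
      ((l.map sMin).toFinset ∈ M) ∧ A = lUnion l := by
  constructor
  · rintro ⟨k, F, hmem, hne, hord, hmins, rfl⟩
    refine ⟨List.ofFn F, List.pairwise_ofFn.2 (fun i j hij => hord i j hij), ?_, ?_, ?_, ?_⟩
    · intro p hp; rcases List.mem_ofFn.1 hp with ⟨i, rfl⟩; exact hne i
    · intro p hp; rcases List.mem_ofFn.1 hp with ⟨i, rfl⟩; exact hmem i
    · convert hmins using 1
      ext x
      simp only [List.mem_toFinset, List.mem_map, Finset.mem_image, Finset.mem_univ,
        true_and]
      constructor
      · rintro ⟨p, hp, rfl⟩; rcases List.mem_ofFn.1 hp with ⟨i, rfl⟩; exact ⟨i, rfl⟩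
      · rintro ⟨i, rfl⟩; exact ⟨F i, List.mem_ofFn.2 ⟨i, rfl⟩, rfl⟩
    · ext x
      simp only [Finset.mem_biUnion, Finset.mem_univ, true_and, mem_lUnion]
      constructor
      · rintro ⟨i, hi⟩; exact ⟨F i, List.mem_ofFn.2 ⟨i, rfl⟩, hi⟩
      · rintro ⟨p, hp, hx⟩; rcases List.mem_ofFn.1 hp with ⟨i, rfl⟩; exact ⟨i, hx⟩
  · rintro ⟨l, hpw, hne, hmem, hmins, rfl⟩
    refine ⟨l.length, fun i => l.get i, fun i => hmem _ (l.get_mem _),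
      fun i => hne _ (l.get_mem _), fun i j hij => List.pairwise_iff_get.1 hpw i j hij,
      ?_, ?_⟩
    · convert hmins using 1
      ext x
      simp only [Finset.mem_image, Finset.mem_univ, true_and, List.mem_toFinset,
        List.mem_map]
      constructor
      · rintro ⟨i, rfl⟩; exact ⟨l.get i, l.get_mem _, rfl⟩
      · rintro ⟨p, hp, rfl⟩
        rcases List.mem_iff_get.1 hp with ⟨i, rfl⟩; exact ⟨i, rfl⟩
    · ext x
      simp only [Finset.mem_biUnion, Finset.mem_univ, true_and, mem_lUnion]
      constructor
      · rintro ⟨p, hp, hx⟩; rcases List.mem_iff_get.1 hp with ⟨i, rfl⟩; exact ⟨i, hx⟩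
      · rintro ⟨i, hi⟩; exact ⟨l.get i, l.get_mem _, hi⟩

/-- List-style characterization of `succStep`. -/
lemma succStep_iff {F : Set (Finset ℕ)} {A : Finset ℕ} :
    A ∈ succStep F ↔ ∃ l : List (Finset ℕ), l.Pairwise finLT ∧
      (∀ p ∈ l, p.Nonempty) ∧ (∀ p ∈ l, p ∈ F) ∧
      (∀ p ∈ l, finLE l.length p) ∧ A = lUnion l := by
  constructor
  · rintro ⟨n, E, hmem, hne, hord, hle, rfl⟩
    refine ⟨List.ofFn E, List.pairwise_ofFn.2 (fun i j hij => hord i j hij), ?_, ?_, ?_, ?_⟩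
    · intro p hp; rcases List.mem_ofFn.1 hp with ⟨i, rfl⟩; exact hne i
    · intro p hp; rcases List.mem_ofFn.1 hp with ⟨i, rfl⟩; exact hmem i
    · intro p hp; rcases List.mem_ofFn.1 hp with ⟨i, rfl⟩
      simpa using hle i
    · ext x
      simp only [Finset.mem_biUnion, Finset.mem_univ, true_and, mem_lUnion]
      constructor
      · rintro ⟨i, hi⟩; exact ⟨E i, List.mem_ofFn.2 ⟨i, rfl⟩, hi⟩
      · rintro ⟨p, hp, hx⟩; rcases List.mem_ofFn.1 hp with ⟨i, rfl⟩; exact ⟨i, hx⟩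
  · rintro ⟨l, hpw, hne, hmem, hle, rfl⟩
    refine ⟨l.length, fun i => l.get i, fun i => hmem _ (l.get_mem _),
      fun i => hne _ (l.get_mem _), fun i j hij => List.pairwise_iff_get.1 hpw i j hij,
      fun i => hle _ (l.get_mem _), ?_⟩
    ext x
    simp only [Finset.mem_biUnion, Finset.mem_univ, true_and, mem_lUnion]
    constructor
    · rintro ⟨p, hp, hx⟩; rcases List.mem_iff_get.1 hp with ⟨i, rfl⟩; exact ⟨i, hx⟩
    · rintro ⟨i, hi⟩; exact ⟨l.get i, l.get_mem _, hi⟩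

end SchreierAux
namespace SchreierAux

def goodTriple (M : Set (Finset ℕ)) (A : Finset ℕ) : Prop :=
  ∃ M1 M2 M3 : Finset ℕ, M1 ∈ M ∧ M2 ∈ M ∧ M3 ∈ M ∧
    finLT M1 M2 ∧ finLT M2 M3 ∧ finLT M1 M3 ∧ A = M1 ∪ M2 ∪ M3

lemma goodTriple.mem_famThree {M : Set (Finset ℕ)} {A : Finset ℕ}
    (h : goodTriple M A) : A ∈ famThree M := by
  obtain ⟨M1, M2, M3, h1, h2, h3, h12, h23, _, rfl⟩ := h
  exact ⟨M1, M2, M3, h1, h2, h3, h12, h23, rfl⟩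

lemma grouping (𝒮 : SchreierSystem) (γ : Ordinal) (n : ℕ) (L : List (Finset ℕ))
    (hpw : L.Pairwise finLT) (hne : ∀ p ∈ L, p.Nonempty) (hmem : ∀ p ∈ L, p ∈ 𝒮.S γ)
    (hge : ∀ p ∈ L, finLE n p) (hlen : L.length ≤ 6 * n) :
    goodTriple (𝒮.S (γ + 1)) (lUnion L) := by
  have hget := List.pairwise_iff_get.1 hpw
  -- mins grow along the list
  have hmins : ∀ t (ht : t < L.length), n + t ≤ sMin (L.get ⟨t, ht⟩) := by
    intro t
    induction t with
    | zero =>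
      intro ht
      have h0 := hge _ (L.get_mem ⟨0, ht⟩)
      simpa using h0 _ (sMin_mem (hne _ (L.get_mem ⟨0, ht⟩)))
    | succ t ih =>
      intro ht
      have ht' : t < L.length := Nat.lt_of_succ_lt ht
      have hlt : finLT (L.get ⟨t, ht'⟩) (L.get ⟨t + 1, ht⟩) := by
        exact hget ⟨t, ht'⟩ ⟨t + 1, ht⟩ (by simp)
      have := sMin_lt_sMin (hne _ (L.get_mem _)) (hne _ (L.get_mem _)) hlt
      have := ih ht'
      omega
  have helt : ∀ t (ht : t < L.length), ∀ x ∈ L.get ⟨t, ht⟩, n + t ≤ x := by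
    intro t ht x hx
    exact le_trans (hmins t ht) (sMin_le hx)
  set L1 := L.take n with hL1def
  set L2 := (L.drop n).take (2 * n) with hL2def
  set L3 := L.drop (3 * n) with hL3def
  -- index description of membership
  have memL1 : ∀ p ∈ L1, ∃ t, t < n ∧ ∃ (ht : t < L.length), p = L.get ⟨t, ht⟩ := by
    intro p hp
    rcases List.mem_iff_getElem.1 hp with ⟨j, hj, hpj⟩
    have hjn : j < n := lt_of_lt_of_le hj (by simpa [hL1def] using List.length_take_le n L)
    have hjL : j < L.length := lt_of_lt_of_le hj (List.Sublist.length_le (List.take_sublist _ _))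
    refine ⟨j, hjn, hjL, ?_⟩
    rw [← hpj]; simp [hL1def, List.getElem_take]
  have memL2 : ∀ p ∈ L2, ∃ t, n ≤ t ∧ t < 3 * n ∧ ∃ (ht : t < L.length), p = L.get ⟨t, ht⟩ := by
    intro p hp
    rcases List.mem_iff_getElem.1 hp with ⟨j, hj, hpj⟩
    have hj2 : j < 2 * n := lt_of_lt_of_le hj (by simpa [hL2def] using List.length_take_le (2*n) (L.drop n))
    have hjd : j < (L.drop n).length :=
      lt_of_lt_of_le hj (List.Sublist.length_le (List.take_sublist _ _))
    have hjL : n + j < L.length := by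
      have := (List.length_drop : (L.drop n).length = L.length - n)
      omega
    refine ⟨n + j, Nat.le_add_right _ _, by omega, hjL, ?_⟩
    rw [← hpj]
    simp [hL2def, List.getElem_take, List.getElem_drop]
  have memL3 : ∀ p ∈ L3, ∃ t, 3 * n ≤ t ∧ ∃ (ht : t < L.length), p = L.get ⟨t, ht⟩ := by
    intro p hp
    rcases List.mem_iff_getElem.1 hp with ⟨j, hj, hpj⟩
    have hjL : 3 * n + j < L.length := by
      have h3 : L3.length = L.length - 3 * n := by simp [hL3def]
      omega
    refine ⟨3 * n + j, Nat.le_add_right _ _, hjL, ?_⟩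
    rw [← hpj]
    simp [hL3def, List.getElem_drop]
  have subL1 : L1.Sublist L := List.take_sublist _ _
  have subL2 : L2.Sublist L := (List.take_sublist _ _).trans (List.drop_sublist _ _)
  have subL3 : L3.Sublist L := List.drop_sublist _ _
  have hS : 𝒮.S (γ + 1) = succStep (𝒮.S γ) := 𝒮.S_succ γ
  -- memberships
  have hM1 : lUnion L1 ∈ 𝒮.S (γ + 1) := by
    rw [hS, succStep_iff]
    refine ⟨L1, List.Pairwise.sublist subL1 hpw, fun p hp => hne p (subL1.subset hp),
      fun p hp => hmem p (subL1.subset hp), ?_, rfl⟩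
    intro p hp
    have h1 : L1.length ≤ n := by simpa [hL1def] using List.length_take_le n L
    exact finLE_mono h1 (hge p (subL1.subset hp))
  have hM2 : lUnion L2 ∈ 𝒮.S (γ + 1) := by
    rw [hS, succStep_iff]
    refine ⟨L2, List.Pairwise.sublist subL2 hpw, fun p hp => hne p (subL2.subset hp),
      fun p hp => hmem p (subL2.subset hp), ?_, rfl⟩
    intro p hp
    have h2 : L2.length ≤ 2 * n := by simpa [hL2def] using List.length_take_le (2*n) (L.drop n)
    refine finLE_mono h2 ?_
    rcases memL2 p hp with ⟨t, hnt, _, ht, rfl⟩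
    intro x hx
    have := helt t ht x hx
    omega
  have hM3 : lUnion L3 ∈ 𝒮.S (γ + 1) := by
    rw [hS, succStep_iff]
    refine ⟨L3, List.Pairwise.sublist subL3 hpw, fun p hp => hne p (subL3.subset hp),
      fun p hp => hmem p (subL3.subset hp), ?_, rfl⟩
    intro p hp
    have h3 : L3.length ≤ 3 * n := by
      have h3' : L3.length = L.length - 3 * n := by simp [hL3def]
      omega
    refine finLE_mono h3 ?_
    rcases memL3 p hp with ⟨t, hnt, ht, rfl⟩
    intro x hx
    have := helt t ht x hx
    omega
  -- orderings
  have cross : ∀ (lA lB : List (Finset ℕ)),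
      (∀ p ∈ lA, ∃ t, ∃ (ht : t < L.length), p = L.get ⟨t, ht⟩ ∧ t < 3 * n) →
      (∀ p ∈ lB, ∃ t, ∃ (ht : t < L.length), p = L.get ⟨t, ht⟩ ∧ 3 * n ≤ t) →
      True := fun _ _ _ _ => trivial
  have h12 : finLT (lUnion L1) (lUnion L2) := by
    intro a ha b hb
    rcases mem_lUnion.1 ha with ⟨p, hp, hap⟩
    rcases mem_lUnion.1 hb with ⟨q, hq, hbq⟩
    rcases memL1 p hp with ⟨t1, ht1n, ht1, rfl⟩
    rcases memL2 q hq with ⟨t2, hnt2, _, ht2, rfl⟩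
    exact hget ⟨t1, ht1⟩ ⟨t2, ht2⟩ (by simp; omega) a hap b hbq
  have h23 : finLT (lUnion L2) (lUnion L3) := by
    intro a ha b hb
    rcases mem_lUnion.1 ha with ⟨p, hp, hap⟩
    rcases mem_lUnion.1 hb with ⟨q, hq, hbq⟩
    rcases memL2 p hp with ⟨t1, _, ht13, ht1, rfl⟩
    rcases memL3 q hq with ⟨t2, hnt2, ht2, rfl⟩
    exact hget ⟨t1, ht1⟩ ⟨t2, ht2⟩ (by simp; omega) a hap b hbq
  have h13 : finLT (lUnion L1) (lUnion L3) := by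
    intro a ha b hb
    rcases mem_lUnion.1 ha with ⟨p, hp, hap⟩
    rcases mem_lUnion.1 hb with ⟨q, hq, hbq⟩
    rcases memL1 p hp with ⟨t1, ht1n, ht1, rfl⟩
    rcases memL3 q hq with ⟨t2, hnt2, ht2, rfl⟩
    exact hget ⟨t1, ht1⟩ ⟨t2, ht2⟩ (by simp; omega) a hap b hbq
  refine ⟨lUnion L1, lUnion L2, lUnion L3, hM1, hM2, hM3, h12, h23, h13, ?_⟩
  have hsplit : L = L1 ++ (L2 ++ L3) := by
    have e1 : L1 ++ L.drop n = L := List.take_append_drop n L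
    have e2 : L2 ++ (L.drop n).drop (2 * n) = L.drop n := List.take_append_drop (2*n) _
    have e3 : (L.drop n).drop (2 * n) = L3 := by
      rw [List.drop_drop]
      congr 1
      omega
    rw [← e1, ← e2, e3]
  rw [hsplit, lUnion_append, lUnion_append, Finset.union_assoc]

end SchreierAux
namespace SchreierAux

lemma mins_card {l : List (Finset ℕ)} (hpw : l.Pairwise finLT) (hne : ∀ p ∈ l, p.Nonempty) :
    ((l.map sMin).toFinset).card = l.length := by
  have hlt : (l.map sMin).Pairwise (· < ·) := by
    refine List.pairwise_map.2 (List.Pairwise.imp_of_mem ?_ hpw)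
    intro a b ha hb hab
    exact sMin_lt_sMin (hne a ha) (hne b hb) hab
  have hnd : (l.map sMin).Nodup := hlt.imp ne_of_lt
  rw [List.toFinset_card_of_nodup hnd, List.length_map]

lemma empty_mem_S (𝒮 : SchreierSystem) (ξ : Ordinal) (hξ : ξ < omegaOne) :
    (∅ : Finset ℕ) ∈ 𝒮.S ξ := by
  have hsucc : ∀ γ : Ordinal, (∅ : Finset ℕ) ∈ 𝒮.S (γ + 1) := by
    intro γ
    rw [𝒮.S_succ, succStep_iff]
    exact ⟨[], by simp, by simp, by simp, by simp, rfl⟩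
  rcases Ordinal.zero_or_succ_or_isSuccLimit ξ with rfl | ⟨γ, rfl⟩ | hlim
  · rw [𝒮.S_zero]; exact Or.inl rfl
  · rw [← Ordinal.add_one_eq_succ]; exact hsucc γ
  · rw [𝒮.S_limit ξ hlim hξ]
    refine ⟨1, le_refl 1, fun a ha => by simp at ha, ?_⟩
    rw [𝒮.α_one ξ hlim hξ, ← zero_add 1]
    exact hsucc 0

lemma card_le_one_of_S_zero (𝒮 : SchreierSystem) {p : Finset ℕ} (hp : p ∈ 𝒮.S 0) :
    p.card ≤ 1 := by
  rw [𝒮.S_zero] at hp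
  rcases hp with rfl | ⟨m, rfl⟩ <;> simp

lemma main_induction (𝒮 : SchreierSystem) : ∀ ξ : Ordinal, 1 ≤ ξ → ξ < omegaOne →
    ∀ A ∈ famComp (famComp (𝒮.S ξ) (Acard 2)) (Acard 3), goodTriple (𝒮.S ξ) A := by
  intro ξ
  induction ξ using Ordinal.induction with
  | h ξ IH =>
  intro h1 hξ A hA
  rw [famComp_iff] at hA
  obtain ⟨lF, hFpw, hFne, hF3, hBmem, rfl⟩ := hA
  rw [famComp_iff] at hBmem
  obtain ⟨lG, hGpw, hGne, hG2, hCmem, hBdef⟩ := hBmem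
  -- every element of `A` is at least some element of `Cset`
  have hAeltC : ∀ a ∈ lUnion lF, ∃ x ∈ (lG.map sMin).toFinset, x ≤ a := by
    intro a ha
    rcases mem_lUnion.1 ha with ⟨f, hf, haf⟩
    have h1 : sMin f ∈ (lF.map sMin).toFinset := by
      simp only [List.mem_toFinset, List.mem_map]; exact ⟨f, hf, rfl⟩
    rw [hBdef] at h1
    rcases mem_lUnion.1 h1 with ⟨g, hg, hmg⟩
    refine ⟨sMin g, ?_, ?_⟩
    · simp only [List.mem_toFinset, List.mem_map]; exact ⟨g, hg, rfl⟩
    · exact le_trans (sMin_le hmg) (sMin_le haf)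
  rcases Ordinal.zero_or_succ_or_isSuccLimit ξ with rfl | ⟨γ, rfl⟩ | hlim
  · exfalso
    rw [nonpos_iff_eq_zero] at h1
    exact one_ne_zero h1
  · -- successor case
    rw [← Ordinal.add_one_eq_succ] at *
    have hγω : γ < omegaOne := lt_trans (Order.lt_succ γ) (by rwa [Ordinal.add_one_eq_succ] at hξ)
    rw [𝒮.S_succ γ, succStep_iff] at hCmem
    obtain ⟨lC, hCpw, hCne, hCS, hCle, hCdef⟩ := hCmem
    set n := lC.length with hn
    -- every element of `A` is at least `n`
    have hAn : ∀ a ∈ lUnion lF, n ≤ a := by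
      intro a ha
      rcases hAeltC a ha with ⟨x, hx, hxa⟩
      rw [hCdef] at hx
      rcases mem_lUnion.1 hx with ⟨c, hc, hxc⟩
      exact le_trans (hCle c hc x hxc) hxa
    rcases eq_or_ne γ 0 with rfl | hγ0
    · -- base case ξ = 1
      have cardC : ((lG.map sMin).toFinset).card ≤ n := by
        rw [hCdef]
        have := card_lUnion_le lC 1 (fun p hp => card_le_one_of_S_zero 𝒮 (hCS p hp))
        simpa using this
      have cardB : ((lF.map sMin).toFinset).card ≤ 2 * lG.length := by
        rw [hBdef]
        have := card_lUnion_le lG 2 (fun p hp => hG2 p hp)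
        omega
      have hlenG : lG.length = ((lG.map sMin).toFinset).card := (mins_card hGpw hGne).symm
      have hlenF : lF.length = ((lF.map sMin).toFinset).card := (mins_card hFpw hFne).symm
      have cardA : (lUnion lF).card ≤ 3 * lF.length := by
        have := card_lUnion_le lF 3 (fun p hp => hF3 p hp)
        omega
      have cardA6 : (lUnion lF).card ≤ 6 * n := by omega
      set L : List (Finset ℕ) :=
        (Finset.sort (lUnion lF) (· ≤ ·)).map (fun a => ({a} : Finset ℕ)) with hLdef
      have hLU : lUnion L = lUnion lF := by
        ext x
        constructor
        · intro hx
          rcases mem_lUnion.1 hx with ⟨p, hp, hxp⟩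
          rw [hLdef] at hp
          rcases List.mem_map.1 hp with ⟨a, ha, rfl⟩
          rw [Finset.mem_singleton] at hxp
          subst hxp
          exact (Finset.mem_sort _).1 ha
        · intro hx
          refine mem_lUnion.2 ⟨{x}, ?_, Finset.mem_singleton_self x⟩
          rw [hLdef]
          exact List.mem_map.2 ⟨x, (Finset.mem_sort _).2 hx, rfl⟩
      have hres := grouping 𝒮 0 n L ?_ ?_ ?_ ?_ ?_
      · rwa [hLU] at hres
      · rw [hLdef]
        refine List.pairwise_map.2 ?_
        have : (Finset.sort (lUnion lF) (· ≤ ·)).Pairwise (· < ·) :=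
          (Finset.sortedLT_sort (lUnion lF)).pairwise
        refine this.imp ?_
        intro a b hab
        intro x hx y hy
        rw [Finset.mem_singleton] at hx hy
        subst hx; subst hy; exact hab
      · intro p hp
        rw [hLdef] at hp
        rcases List.mem_map.1 hp with ⟨a, _, rfl⟩
        exact ⟨a, Finset.mem_singleton_self a⟩
      · intro p hp
        rw [hLdef] at hp
        rcases List.mem_map.1 hp with ⟨a, _, rfl⟩
        rw [𝒮.S_zero]
        exact Or.inr ⟨a, rfl⟩
      · intro p hp
        rw [hLdef] at hp
        rcases List.mem_map.1 hp with ⟨a, ha, rfl⟩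
        intro x hx
        rw [Finset.mem_singleton] at hx
        subst hx
        exact hAn _ ((Finset.mem_sort _).1 ha)
      · rw [hLdef, List.length_map, Finset.length_sort]
        exact cardA6
    · -- successor case with γ ≥ 1
      have h1γ : 1 ≤ γ := Ordinal.one_le_iff_ne_zero.2 hγ0
      have hγlt : γ < γ + 1 := by
        rw [Ordinal.add_one_eq_succ]; exact Order.lt_succ γ
      have IHγ := IH γ hγlt h1γ hγω
      -- the blocks
      set U : Finset ℕ → Finset ℕ :=
        fun c => lUnion (lG.filter (fun g => decide (sMin g ∈ c))) with hUdef
      set D : Finset ℕ → Finset ℕ :=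
        fun c => lUnion (lF.filter (fun f => decide (sMin f ∈ U c))) with hDdef
      -- cross ordering
      have crossU : ∀ c c' : Finset ℕ, finLT c c' → finLT (U c) (U c') := by
        intro c c' hcc u hu v hv
        rcases mem_lUnion.1 hu with ⟨g, hg, hug⟩
        rcases mem_lUnion.1 hv with ⟨g', hg', hvg⟩
        rw [List.mem_filter] at hg hg'
        have hgc : sMin g ∈ c := of_decide_eq_true hg.2
        have hgc' : sMin g' ∈ c' := of_decide_eq_true hg'.2
        have hmm : sMin g < sMin g' := hcc _ hgc _ hgc'
        rcases pairwise_cases hGpw hg.1 hg'.1 with rfl | h | h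
        · exact absurd hmm (lt_irrefl _)
        · exact h u hug v hvg
        · exact absurd (h _ (sMin_mem (hGne _ hg'.1)) _ (sMin_mem (hGne _ hg.1)))
            (by omega)
      have crossD : ∀ c c' : Finset ℕ, finLT c c' → finLT (D c) (D c') := by
        intro c c' hcc x hx y hy
        rcases mem_lUnion.1 hx with ⟨f, hf, hxf⟩
        rcases mem_lUnion.1 hy with ⟨f', hf', hyf⟩
        rw [List.mem_filter] at hf hf'
        have hfc : sMin f ∈ U c := of_decide_eq_true hf.2
        have hfc' : sMin f' ∈ U c' := of_decide_eq_true hf'.2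
        have hmm : sMin f < sMin f' := crossU c c' hcc _ hfc _ hfc'
        rcases pairwise_cases hFpw hf.1 hf'.1 with rfl | h | h
        · exact absurd hmm (lt_irrefl _)
        · exact h x hxf y hyf
        · exact absurd (h _ (sMin_mem (hFne _ hf'.1)) _ (sMin_mem (hFne _ hf.1)))
            (by omega)
      -- each block is in the composed family at level γ
      have hDgood : ∀ c ∈ lC, goodTriple (𝒮.S γ) (D c) := by
        intro c hc
        apply IHγ
        rw [famComp_iff]
        refine ⟨lF.filter (fun f => decide (sMin f ∈ U c)), hFpw.filter _, ?_, ?_, ?_, rfl⟩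
        · intro p hp; exact hFne p (List.mem_filter.1 hp).1
        · intro p hp; exact hF3 p (List.mem_filter.1 hp).1
        · have hFc : (((lF.filter (fun f => decide (sMin f ∈ U c))).map sMin).toFinset)
              = U c := by
            ext x
            simp only [List.mem_toFinset, List.mem_map, List.mem_filter]
            constructor
            · rintro ⟨f, ⟨hf, hdec⟩, rfl⟩
              exact of_decide_eq_true hdec
            · intro hx
              have hxB : x ∈ (lF.map sMin).toFinset := by
                rw [hBdef]
                rcases mem_lUnion.1 hx with ⟨g, hg, hxg⟩
                exact mem_lUnion.2 ⟨g, (List.mem_filter.1 hg).1, hxg⟩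
              simp only [List.mem_toFinset, List.mem_map] at hxB
              rcases hxB with ⟨f, hf, rfl⟩
              exact ⟨f, ⟨hf, decide_eq_true hx⟩, rfl⟩
          rw [hFc]
          rw [famComp_iff]
          refine ⟨lG.filter (fun g => decide (sMin g ∈ c)), hGpw.filter _, ?_, ?_, ?_, rfl⟩
          · intro p hp; exact hGne p (List.mem_filter.1 hp).1
          · intro p hp; exact hG2 p (List.mem_filter.1 hp).1
          · have hGc : (((lG.filter (fun g => decide (sMin g ∈ c))).map sMin).toFinset)
                = c := by
              ext x
              simp only [List.mem_toFinset, List.mem_map, List.mem_filter]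
              constructor
              · rintro ⟨g, ⟨hg, hdec⟩, rfl⟩
                exact of_decide_eq_true hdec
              · intro hx
                have hxC : x ∈ (lG.map sMin).toFinset := by
                  rw [hCdef]
                  exact mem_lUnion.2 ⟨c, hc, hx⟩
                simp only [List.mem_toFinset, List.mem_map] at hxC
                rcases hxC with ⟨g, hg, rfl⟩
                exact ⟨g, ⟨hg, decide_eq_true hx⟩, rfl⟩
            rw [hGc]
            exact hCS c hc
      -- extract 3-piece lists for each block
      have hT : ∀ c ∈ lC, ∃ lc : List (Finset ℕ), lc.Pairwise finLT ∧
          (∀ p ∈ lc, p.Nonempty) ∧ (∀ p ∈ lc, p ∈ 𝒮.S γ) ∧ lc.length ≤ 3 ∧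
          lUnion lc = D c := by
        intro c hc
        obtain ⟨M1, M2, M3, m1, m2, m3, h12, h23, h13, hU3⟩ := hDgood c hc
        refine ⟨[M1, M2, M3].filter (fun p => decide p.Nonempty), ?_, ?_, ?_, ?_, ?_⟩
        · refine List.Pairwise.filter _ ?_
          refine List.pairwise_cons.2 ⟨?_, List.pairwise_cons.2 ⟨?_, by simp⟩⟩
          · intro p hp
            rcases List.mem_cons.1 hp with rfl | hp'
            · exact h12
            · rw [List.mem_singleton] at hp'; subst hp'; exact h13
          · intro p hp
            rw [List.mem_singleton] at hp; subst hp; exact h23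
        · intro p hp
          exact of_decide_eq_true (List.mem_filter.1 hp).2
        · intro p hp
          have hp1 := (List.mem_filter.1 hp).1
          rcases List.mem_cons.1 hp1 with rfl | hp2
          · exact m1
          rcases List.mem_cons.1 hp2 with rfl | hp3
          · exact m2
          rw [List.mem_singleton] at hp3; subst hp3; exact m3
        · exact le_trans (List.length_filter_le _ _) (by simp)
        · rw [hU3]
          ext x
          simp only [mem_lUnion, List.mem_filter, Finset.mem_union]
          constructor
          · rintro ⟨p, ⟨hp, _⟩, hx⟩
            rcases List.mem_cons.1 hp with rfl | hp2
            · exact Or.inl (Or.inl hx)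
            rcases List.mem_cons.1 hp2 with rfl | hp3
            · exact Or.inl (Or.inr hx)
            rw [List.mem_singleton] at hp3; subst hp3; exact Or.inr hx
          · rintro ((hx | hx) | hx)
            · exact ⟨M1, ⟨by simp, decide_eq_true ⟨x, hx⟩⟩, hx⟩
            · exact ⟨M2, ⟨by simp, decide_eq_true ⟨x, hx⟩⟩, hx⟩
            · exact ⟨M3, ⟨by simp, decide_eq_true ⟨x, hx⟩⟩, hx⟩
      -- choice function
      set T : {c // c ∈ lC} → List (Finset ℕ) := fun c => (hT c.1 c.2).choose with hTdef
      have hTspec : ∀ c : {c // c ∈ lC}, (T c).Pairwise finLT ∧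
          (∀ p ∈ T c, p.Nonempty) ∧ (∀ p ∈ T c, p ∈ 𝒮.S γ) ∧ (T c).length ≤ 3 ∧
          lUnion (T c) = D c.1 := fun c => (hT c.1 c.2).choose_spec
      set LM : List (Finset ℕ) := (lC.attach.map T).flatten with hLMdef
      have memLM : ∀ p ∈ LM, ∃ c : {c // c ∈ lC}, p ∈ T c := by
        intro p hp
        rw [hLMdef, List.mem_flatten] at hp
        rcases hp with ⟨l, hl, hpl⟩
        rcases List.mem_map.1 hl with ⟨c, _, rfl⟩
        exact ⟨c, hpl⟩
      have hDsubA : ∀ c : Finset ℕ, D c ⊆ lUnion lF := by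
        intro c x hx
        rcases mem_lUnion.1 hx with ⟨f, hf, hxf⟩
        exact mem_lUnion.2 ⟨f, (List.mem_filter.1 hf).1, hxf⟩
      have hpsubD : ∀ (c : {c // c ∈ lC}) (p : Finset ℕ), p ∈ T c → p ⊆ D c.1 := by
        intro c p hp x hx
        rw [← (hTspec c).2.2.2.2]
        exact mem_lUnion.2 ⟨p, hp, hx⟩
      -- apply grouping
      have hres := grouping 𝒮 γ n LM ?_ ?_ ?_ ?_ ?_
      · have hLMU : lUnion LM = lUnion lF := by
          apply Finset.Subset.antisymm
          · intro x hx
            rcases mem_lUnion.1 hx with ⟨p, hp, hxp⟩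
            rcases memLM p hp with ⟨c, hpc⟩
            exact hDsubA c.1 (hpsubD c p hpc hxp)
          · intro a ha
            rcases mem_lUnion.1 ha with ⟨f, hf, haf⟩
            have h1 : sMin f ∈ (lF.map sMin).toFinset := by
              simp only [List.mem_toFinset, List.mem_map]; exact ⟨f, hf, rfl⟩
            rw [hBdef] at h1
            rcases mem_lUnion.1 h1 with ⟨g, hg, hmg⟩
            have h2 : sMin g ∈ (lG.map sMin).toFinset := by
              simp only [List.mem_toFinset, List.mem_map]; exact ⟨g, hg, rfl⟩
            rw [hCdef] at h2
            rcases mem_lUnion.1 h2 with ⟨c, hc, hmc⟩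
            have hgU : sMin f ∈ U c :=
              mem_lUnion.2 ⟨g, List.mem_filter.2 ⟨hg, decide_eq_true hmc⟩, hmg⟩
            have hfD : a ∈ D c :=
              mem_lUnion.2 ⟨f, List.mem_filter.2 ⟨hf, decide_eq_true hgU⟩, haf⟩
            rw [← (hTspec ⟨c, hc⟩).2.2.2.2] at hfD
            rcases mem_lUnion.1 hfD with ⟨p, hp, hap⟩
            refine mem_lUnion.2 ⟨p, ?_, hap⟩
            rw [hLMdef, List.mem_flatten]
            exact ⟨T ⟨c, hc⟩, List.mem_map.2 ⟨⟨c, hc⟩, List.mem_attach _ _, rfl⟩, hp⟩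
        rwa [hLMU] at hres
      · -- pairwise
        rw [hLMdef, List.pairwise_flatten]
        constructor
        · intro l hl
          rcases List.mem_map.1 hl with ⟨c, _, rfl⟩
          exact (hTspec c).1
        · refine List.pairwise_map.2 ?_
          have hattach : lC.attach.Pairwise (fun c c' => finLT c.1 c'.1) := by
            refine List.pairwise_map.1 ?_
            rw [List.attach_map_subtype_val]
            exact hCpw
          refine hattach.imp_of_mem ?_
          intro c c' _ _ hcc p hp q hq a ha b hb
          exact crossD c.1 c'.1 hcc a (hpsubD c p hp ha) b (hpsubD c' q hq hb)
      · intro p hp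
        rcases memLM p hp with ⟨c, hpc⟩
        exact (hTspec c).2.1 p hpc
      · intro p hp
        rcases memLM p hp with ⟨c, hpc⟩
        exact (hTspec c).2.2.1 p hpc
      · intro p hp
        rcases memLM p hp with ⟨c, hpc⟩
        intro x hx
        exact hAn x (hDsubA c.1 (hpsubD c p hpc hx))
      · rw [hLMdef, List.length_flatten]
        have hsum : ((lC.attach.map T).map List.length).sum ≤
            ((lC.attach.map T).map List.length).length • 3 := by
          refine List.sum_le_card_nsmul _ _ ?_
          intro x hx
          rcases List.mem_map.1 hx with ⟨l, hl, rfl⟩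
          rcases List.mem_map.1 hl with ⟨c, _, rfl⟩
          exact (hTspec c).2.2.2.1
        have hlen' : ((lC.attach.map T).map List.length).length = n := by
          rw [List.length_map, List.length_map, List.length_attach]
        rw [hlen'] at hsum
        simp only [smul_eq_mul] at hsum
        omega
  · -- limit case
    rw [𝒮.S_limit ξ hlim hξ] at hCmem
    obtain ⟨n, hn1, hCn, hCα⟩ := hCmem
    have hα1 : 1 ≤ 𝒮.α ξ n := 𝒮.α_pos ξ hlim hξ n hn1
    have hαlt : 𝒮.α ξ n < ξ := 𝒮.α_lt ξ hlim hξ n hn1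
    have hαω : 𝒮.α ξ n < omegaOne := lt_trans hαlt hξ
    have hA' : lUnion lF ∈ famComp (famComp (𝒮.S (𝒮.α ξ n)) (Acard 2)) (Acard 3) := by
      rw [famComp_iff]
      refine ⟨lF, hFpw, hFne, hF3, ?_, rfl⟩
      rw [famComp_iff]
      exact ⟨lG, hGpw, hGne, hG2, hCα, hBdef⟩
    obtain ⟨M1, M2, M3, m1, m2, m3, h12, h23, h13, hU3⟩ :=
      IH (𝒮.α ξ n) hαlt hα1 hαω (lUnion lF) hA'
    have hAn : ∀ a ∈ lUnion lF, n ≤ a := by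
      intro a ha
      rcases hAeltC a ha with ⟨x, hx, hxa⟩
      exact le_trans (hCn x hx) hxa
    have lift : ∀ M : Finset ℕ, M ∈ 𝒮.S (𝒮.α ξ n) → M ⊆ lUnion lF → M ∈ 𝒮.S ξ := by
      intro M hM hsub
      rw [𝒮.S_limit ξ hlim hξ]
      exact ⟨n, hn1, fun a ha => hAn a (hsub ha), hM⟩
    have hsub1 : M1 ⊆ lUnion lF := by rw [hU3]; intro x hx; simp [hx]
    have hsub2 : M2 ⊆ lUnion lF := by rw [hU3]; intro x hx; simp [hx]
    have hsub3 : M3 ⊆ lUnion lF := by rw [hU3]; intro x hx; simp [hx]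
    exact ⟨M1, M2, M3, lift M1 m1 hsub1, lift M2 m2 hsub2, lift M3 m3 hsub3,
      h12, h23, h13, hU3⟩

end SchreierAux

/-- For every ordinal `1 ≤ ξ < ω₁`: `(S_ξ[A_2])[A_3] ⊆ (S_ξ)³`. -/
theorem comp_A2_A3_subset (𝒮 : SchreierSystem) (ξ : Ordinal) (h1 : 1 ≤ ξ)
    (hξ : ξ < omegaOne) :
    famComp (famComp (𝒮.S ξ) (Acard 2)) (Acard 3) ⊆ famThree (𝒮.S ξ) := by
  intro A hA
  exact (SchreierAux.main_induction 𝒮 ξ h1 hξ A hA).mem_famThree
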